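/- If m is a basic tuple of p partitions of n (i.e., each partition is monotone non-increasing with at least two parts, and 2n ≤ Σ_{j=0}^{p−1}(n − m_{j,1})), then idx(m) ≤ 0. -/

import Mathlib

/-- The index of rigidity of a tuple of `p` partitions of `n`. -/
def idx (p n : ℕ) (m : Fin p → List ℕ) : ℤ :=
  2 * (n : ℤ) ^ 2 - ∑ j : Fin p, ((n : ℤ) ^ 2 - ((m j).map (fun x => (x : ℤ) ^ 2)).sum)

lemma le_headI_of_sorted {l : List ℕ} (h : l.Pairwise (· ≥ ·)) :
    ∀ x ∈ l, x ≤ l.headI := by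
  cases l with
  | nil => simp
  | cons a t =>
    intro x hx
    rcases List.mem_cons.mp hx with rfl | hx
    · simp
    · exact (List.pairwise_cons.mp h).1 x hx

lemma sq_sum_le {l : List ℕ} (h : l.Pairwise (· ≥ ·)) :
    (l.map (fun x => (x : ℤ) ^ 2)).sum ≤ (l.headI : ℤ) * (l.sum : ℤ) := by
  have e : (l.map (fun x => (x : ℤ) ^ 2)).sum
      = ((l.map (Nat.cast : ℕ → ℤ)).map (fun x => x ^ 2)).sum := by
    clear h
    induction l with
    | nil => rfl
    | cons a t ih => simp_all
  rw [e, List.map_map]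
  have h1 : ((l.map (fun x : ℕ => ((x : ℤ)) ^ 2)).sum : ℤ)
      ≤ (l.map (fun x : ℕ => (l.headI : ℤ) * (x : ℤ))).sum := by
    apply List.sum_le_sum
    intro x hx
    have hle := le_headI_of_sorted h x hx
    have hle' : (x : ℤ) ≤ (l.headI : ℤ) := by exact_mod_cast hle
    have hx0 : (0 : ℤ) ≤ (x : ℤ) := Int.ofNat_nonneg x
    nlinarith
  refine le_trans (le_of_eq ?_) (h1.trans (le_of_eq ?_))
  · rfl
  · rw [List.sum_map_mul_left, ← Nat.cast_list_sum]

/-- A basic tuple of partitions (monotone non-increasing, positive parts summing to `n`,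
at least two parts each, and `2n ≤ Σⱼ (n − m_{j,1})`) has `idx m ≤ 0`. -/
theorem idx_nonpos_of_basic (p n : ℕ) (hn : 0 < n) (m : Fin p → List ℕ)
    (hmono : ∀ j, (m j).Pairwise (· ≥ ·))
    (hpos : ∀ j, ∀ x ∈ m j, 0 < x)
    (hsum : ∀ j, (m j).sum = n)
    (hlen : ∀ j, 2 ≤ (m j).length)
    (hbasic : 2 * (n : ℤ) ≤ ∑ j : Fin p, ((n : ℤ) - ((m j).headI : ℤ))) :
    idx p n m ≤ 0 := by
  have key : ∀ j : Fin p, (n : ℤ) * ((n : ℤ) - ((m j).headI : ℤ)) ≤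
      (n : ℤ) ^ 2 - ((m j).map (fun x => (x : ℤ) ^ 2)).sum := by
    intro j
    have h := sq_sum_le (hmono j)
    rw [hsum j] at h
    nlinarith [Int.ofNat_nonneg n]
  have h2 : (n : ℤ) * ∑ j : Fin p, ((n : ℤ) - ((m j).headI : ℤ)) ≤
      ∑ j : Fin p, ((n : ℤ) ^ 2 - ((m j).map (fun x => (x : ℤ) ^ 2)).sum) := by
    rw [Finset.mul_sum]
    exact Finset.sum_le_sum fun j _ => key j
  have h3 : (n : ℤ) * (2 * n) ≤ (n : ℤ) * ∑ j : Fin p, ((n : ℤ) - ((m j).headI : ℤ)) := by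
    apply mul_le_mul_of_nonneg_left hbasic (Int.ofNat_nonneg n)
  unfold idx
  nlinarith
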